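/- The formal power series F(t) = Σ_{n≥1} ca_n(a,b)·t^n, with coefficients in ℤ[a,b], satisfies the quadratic functional equation F = t + (a+b)·t·F + a·b·t·F², i.e., a·b·t·F² − (1 − (a+b)·t)·F + t = 0 in ℤ[a,b][[t]]. -/

import Mathlib

open MvPolynomial

/-- Narayana number T(n,k) = (1/k)·C(n−1,k−1)·C(n,k−1). -/
def narayana (n k : ℕ) : ℕ := ((n - 1).choose (k - 1) * n.choose (k - 1)) / k

/-- The polynomial ca_n(a,b) = Σ_{i=0}^{n−1} T(n,i+1)·a^i·b^{n−1−i} ∈ ℤ[a,b],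
with a = X 0 and b = X 1.  (For n = 0 this is the empty sum 0.) -/
noncomputable def caP (n : ℕ) : MvPolynomial (Fin 2) ℤ :=
  ∑ i ∈ Finset.range n, (narayana n (i + 1) : MvPolynomial (Fin 2) ℤ) * X 0 ^ i * X 1 ^ (n - 1 - i)

/-- The generating series F(t) = Σ_{n≥1} ca_n(a,b)·t^n ∈ ℤ[a,b][[t]]. -/
noncomputable def Fcat : PowerSeries (MvPolynomial (Fin 2) ℤ) := PowerSeries.mk fun n => caP n

open Nat

lemma narayana_zero_right (n : ℕ) : narayana n 0 = 0 := by simp [narayana]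

lemma narayana_one_right (n : ℕ) : narayana n 1 = 1 := by simp [narayana]

lemma narayana_eq_zero_of_lt {n k : ℕ} (hn : 1 ≤ n) (h : n < k) : narayana n k = 0 := by
  have h1 : n - 1 < k - 1 := by omega
  simp [narayana, Nat.choose_eq_zero_of_lt h1]

lemma fact_pos_q (p : ℕ) : (0:ℚ) < (p ! : ℚ) := by exact_mod_cast Nat.factorial_pos p

lemma chq (p q : ℕ) : (((p+q).choose p : ℕ) : ℚ) = (p+q)! / (p ! * q !) := by
  rw [Nat.cast_choose ℚ (Nat.le_add_right p q), Nat.add_sub_cancel_left]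

lemma chq' (n p q : ℕ) (h : n = p + q) : ((n.choose p : ℕ) : ℚ) = n ! / (p ! * q !) := by
  subst h; exact chq p q

lemma nar_key (i s : ℕ) :
    ((i+s+1).choose i * (i+s+2).choose i : ℤ) =
      (i+1) * (((i+s+2).choose (i+1) * (i+s+1).choose i : ℤ)
        - ((i+s+2).choose i * (i+s+1).choose (i+1) : ℤ)) := by
  qify
  rw [chq' (i+s+1) i (s+1) (by ring), chq' (i+s+2) i (s+2) (by ring),
      chq' (i+s+2) (i+1) (s+1) (by ring), chq' (i+s+1) (i+1) s (by ring)]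
  simp only [Nat.factorial_succ]
  push_cast
  have h1 := fact_pos_q i; have h2 := fact_pos_q s
  field_simp
  ring

lemma nar_dvd (n k : ℕ) (hk : 1 ≤ k) : k ∣ (n - 1).choose (k - 1) * n.choose (k - 1) := by
  rcases Nat.lt_or_ge n k with h | h
  · -- n < k
    rcases Nat.eq_zero_or_pos n with rfl | hn
    · rcases Nat.eq_or_lt_of_le hk with rfl | hk2
      · exact one_dvd _
      · have : (0:ℕ).choose (k-1) = 0 := Nat.choose_eq_zero_of_lt (by omega)
        simp [this]
    · have : (n-1).choose (k-1) = 0 := Nat.choose_eq_zero_of_lt (by omega)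
      simp [this]
  · -- k ≤ n, 1 ≤ k : use nar_key with i = k-1
    obtain ⟨i, rfl⟩ : ∃ i, k = i + 1 := ⟨k - 1, by omega⟩
    rcases Nat.eq_or_lt_of_le h with rfl | h2
    · -- n = k = i+1
      simp [Nat.succ_sub_one, Nat.choose_succ_self_right]
    · obtain ⟨s, rfl⟩ : ∃ s, n = i + s + 2 := ⟨n - i - 2, by omega⟩
      have key := nar_key i s
      have : ((i+1:ℕ) : ℤ) ∣ ((i+s+1).choose i * (i+s+2).choose i : ℤ) := ⟨_, key⟩
      have h3 : (i+s+2-1) = i+s+1 := by omega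
      have h4 : (i+1-1) = i := by omega
      rw [h3, h4]
      exact_mod_cast this

lemma narayana_mul (n k : ℕ) (hk : 1 ≤ k) :
    (narayana n k) * k = (n - 1).choose (k - 1) * n.choose (k - 1) := by
  exact Nat.div_mul_cancel (nar_dvd n k hk)

lemma narq (n k p q : ℕ) (hk : k = p + 1) (hn : n = p + 1 + q) :
    ((narayana n k : ℕ) : ℚ) = ((p+q)! * (p+q+1)!) / (p ! * q ! * (p+1)! * (q+1)!) := by
  subst hk hn
  have hm := narayana_mul (p+1+q) (p+1) (by omega)
  have hq : ((narayana (p+1+q) (p+1) : ℕ) : ℚ) * (p+1) =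
      ((p+1+q-1).choose (p+1-1) : ℚ) * ((p+1+q).choose (p+1-1) : ℚ) := by
    exact_mod_cast congrArg (fun x : ℕ => (x:ℚ)) hm
  rw [show p+1+q-1 = p+q by omega, show p+1-1 = p by omega] at hq
  rw [chq' (p+q) p q rfl, chq' (p+1+q) p (q+1) (by ring)] at hq
  have h1 := fact_pos_q p; have h2 := fact_pos_q q
  have h3 : ((p:ℚ)+1) ≠ 0 := by positivity
  rw [show ((p+1+q)! : ℚ) = ((p+q+1)! : ℚ) by norm_num [show p+1+q = p+q+1 by ring]] at hq
  have expand : ((p+1)! : ℚ) = (p+1) * (p !) := by exact_mod_cast Nat.factorial_succ p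
  have expand2 : ((q+1)! : ℚ) = (q+1) * (q !) := by exact_mod_cast Nat.factorial_succ q
  rw [expand2] at hq
  rw [expand, expand2]
  have hq1 : (0:ℚ) < (q:ℚ)+1 := by positivity
  field_simp at hq ⊢
  linear_combination hq

set_option maxHeartbeats 2000000 in
lemma NID (m j : ℕ) (hj : j ≤ m + 1) :
    (m+3) * narayana (m+2) (j+1) + m * narayana m (j+1) + m * narayana m (j-1)
      = (2*m+3) * (narayana (m+1) (j+1) + narayana (m+1) j) + 2*m * narayana m j := by
  rcases Nat.eq_zero_or_pos j with rfl | hj1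
  · simp [narayana_one_right, narayana_zero_right]
    ring
  -- j ≥ 1
  rcases Nat.lt_or_ge m (j+1) with hge | hA
  · -- j = m or j = m+1
    rcases Nat.eq_or_lt_of_le hge with hB | hC
    · -- leaf B : m = j
      obtain rfl : m = j := by omega
      rcases Nat.lt_or_ge m 2 with hm | hm
      · interval_cases m
        · decide
      · obtain ⟨v, rfl⟩ : ∃ v, m = v + 2 := ⟨m - 2, by omega⟩
        rw [narayana_eq_zero_of_lt (by omega) (by omega) (n := v+2) (k := v+2+1)]
        qify
        set Dq : ℚ := ((v+2)! : ℚ) * ((v+3)! : ℚ) * 2 with hDq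
        set Zq : ℚ := ((v+1)! : ℚ) with hZq
        have hD : Dq ≠ 0 := by rw [hDq]; positivity
        have h1 := fact_pos_q v
        have E1 : ((narayana (v+2+2) (v+2+1) : ℕ) : ℚ) * Dq
            = Zq^2 * ((↑v+2)^2*(↑v+3)^2*(↑v+4)) := by
          rw [narq (v+2+2) (v+2+1) (v+2) 1 (by omega) (by omega)]
          rw [hDq, hZq]
          simp only [Nat.factorial_succ]
          push_cast
          field_simp
          ring
        have E2 : ((narayana (v+2) (v+2-1) : ℕ) : ℚ) * Dq
            = Zq^2 * ((↑v+1)*(↑v+2)^3*(↑v+3)) := by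
          rw [narq (v+2) (v+2-1) v 1 (by omega) (by omega)]
          rw [hDq, hZq]
          simp only [Nat.factorial_succ]
          push_cast
          field_simp
          ring
        have E3 : ((narayana (v+2+1) (v+2+1) : ℕ) : ℚ) * Dq
            = Zq^2 * (2*(↑v+2)^2*(↑v+3)) := by
          rw [narq (v+2+1) (v+2+1) (v+2) 0 (by omega) (by omega)]
          rw [hDq, hZq]
          simp only [Nat.factorial_succ]
          push_cast
          field_simp
          ring
        have E4 : ((narayana (v+2+1) (v+2) : ℕ) : ℚ) * Dq
            = Zq^2 * ((↑v+2)^3*(↑v+3)^2) := by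
          rw [narq (v+2+1) (v+2) (v+1) 1 (by omega) (by omega)]
          rw [hDq, hZq]
          simp only [Nat.factorial_succ]
          push_cast
          field_simp
          ring
        have E5 : ((narayana (v+2) (v+2) : ℕ) : ℚ) * Dq
            = Zq^2 * (2*(↑v+2)^2*(↑v+3)) := by
          rw [narq (v+2) (v+2) (v+1) 0 (by omega) (by omega)]
          rw [hDq, hZq]
          simp only [Nat.factorial_succ]
          push_cast
          field_simp
          ring
        push_cast at E1 E2 E3 E4 E5 ⊢
        refine mul_right_cancel₀ hD ?_
        linear_combination ((v:ℚ)+5) * E1 + ((v:ℚ)+2) * E2 - (2*(v:ℚ)+7) * E3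
          - (2*(v:ℚ)+7) * E4 - (2*(v:ℚ)+4) * E5
    · -- leaf C : j = m+1
      obtain rfl : j = m + 1 := by omega
      rcases Nat.eq_zero_or_pos m with rfl | hm
      · decide
      · obtain ⟨v, rfl⟩ : ∃ v, m = v + 1 := ⟨m - 1, by omega⟩
        have hself : ∀ p : ℕ, narayana (p+1) (p+1) = 1 := by
          intro p
          simp [narayana, Nat.succ_sub_one, Nat.choose_succ_self_right]
        rw [narayana_eq_zero_of_lt (by omega) (by omega) (n := v+1) (k := v+1+1+1),
            narayana_eq_zero_of_lt (by omega) (by omega) (n := v+1+1) (k := v+1+1+1),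
            narayana_eq_zero_of_lt (by omega) (by omega) (n := v+1) (k := v+1+1),
            show v+1+1-1 = v+1 from by omega,
            hself (v+2), hself v, hself (v+1)]
        ring
  · -- leaf A : j+1 ≤ m
    rcases Nat.eq_or_lt_of_le hj1 with hj2 | hj2
    · -- j = 1
      obtain rfl : j = 1 := hj2.symm
      obtain ⟨u, rfl⟩ : ∃ u, m = u + 2 := ⟨m - 2, by omega⟩
      rw [narayana_zero_right, narayana_one_right, narayana_one_right]
      qify
      rw [narq (u+2+2) (1+1) 1 (u+2) (by omega) (by omega),
          narq (u+2) (1+1) 1 u (by omega) (by omega),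
          narq (u+2+1) (1+1) 1 (u+1) (by omega) (by omega)]
      simp only [show (1:ℕ)+(u+2) = u+3 from by omega, show (1:ℕ)+(u+2)+1 = u+4 from by omega,
        show (1:ℕ)+u = u+1 from by omega, show (1:ℕ)+u+1 = u+2 from by omega,
        show (1:ℕ)+(u+1) = u+2 from by omega, show (1:ℕ)+(u+1)+1 = u+3 from by omega]
      simp only [Nat.factorial_succ, Nat.factorial_zero, Nat.factorial_one]
      push_cast
      have h1 := fact_pos_q u
      field_simp
      ring
    · -- j ≥ 2
      obtain ⟨v, rfl⟩ : ∃ v, j = v + 2 := ⟨j - 2, by omega⟩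
      obtain ⟨u, rfl⟩ : ∃ u, m = v + 3 + u := ⟨m - v - 3, by omega⟩
      have hfs : ∀ x : ℕ, ((x+3)! : ℚ) = (x+3)*(x+2)*(x+1)*(x !) := by
        intro x; push_cast [Nat.factorial_succ]; ring
      qify
      set Dq : ℚ := ((v+2)! : ℚ) * ((v+3)! : ℚ) * ((u+2)! : ℚ) * ((u+3)! : ℚ) with hDq
      set Zq : ℚ := ((v+u+2)! : ℚ) with hZq
      have hD : Dq ≠ 0 := by
        rw [hDq]; positivity
      have E1 : ((narayana (v+3+u+2) (v+2+1) : ℕ) : ℚ) * Dq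
          = Zq^2 * ((v+u+3)^2*(v+u+4)^2*(v+u+5)) := by
        rw [narq (v+3+u+2) (v+2+1) (v+2) (u+2) (by omega) (by omega)]
        rw [show (v+2)+(u+2) = v+u+4 from by omega, show v+u+4+1 = v+u+5 from by omega]
        rw [hDq, hZq]
        rw [show ((v+u+4)! : ℕ) = (v+u+4)*(v+u+3)*((v+u+2)!) from by
              rw [show v+u+4 = (v+u+2)+2 from by omega]; simp [Nat.factorial_succ]; ring,
            show ((v+u+5)! : ℕ) = (v+u+5)*(v+u+4)*(v+u+3)*((v+u+2)!) from by
              rw [show v+u+5 = (v+u+2)+3 from by omega]; simp [Nat.factorial_succ]; ring]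
        push_cast
        field_simp
      have E2 : ((narayana (v+3+u) (v+2+1) : ℕ) : ℚ) * Dq
          = Zq^2 * ((↑v+↑u+3)*(↑u+1)*(↑u+2)^2*(↑u+3)) := by
        rw [narq (v+3+u) (v+2+1) (v+2) (u) (by omega) (by omega)]
        rw [show (v+2)+(u) = v+u+2 from by omega, show v+u+2+1 = v+u+3 from by omega]
        rw [hDq, hZq]
        simp only [Nat.factorial_succ]
        push_cast
        have h1 := fact_pos_q u
        have h2 := fact_pos_q v
        have h3 := fact_pos_q (v+u)
        field_simp
        ring
      have E3 : ((narayana (v+3+u) (v+2-1) : ℕ) : ℚ) * Dq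
          = Zq^2 * ((↑v+↑u+3)*(↑v+1)*(↑v+2)^2*(↑v+3)) := by
        rw [narq (v+3+u) (v+2-1) (v) (u+2) (by omega) (by omega)]
        rw [show (v)+(u+2) = v+u+2 from by omega, show v+u+2+1 = v+u+3 from by omega]
        rw [hDq, hZq]
        simp only [Nat.factorial_succ]
        push_cast
        have h1 := fact_pos_q u
        have h2 := fact_pos_q v
        have h3 := fact_pos_q (v+u)
        field_simp
        ring
      have E4 : ((narayana (v+3+u+1) (v+2+1) : ℕ) : ℚ) * Dq
          = Zq^2 * ((↑v+↑u+3)^2*(↑v+↑u+4)*(↑u+2)*(↑u+3)) := by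
        rw [narq (v+3+u+1) (v+2+1) (v+2) (u+1) (by omega) (by omega)]
        rw [show (v+2)+(u+1) = v+u+3 from by omega, show v+u+3+1 = v+u+4 from by omega]
        rw [hDq, hZq]
        simp only [Nat.factorial_succ]
        push_cast
        have h1 := fact_pos_q u
        have h2 := fact_pos_q v
        have h3 := fact_pos_q (v+u)
        field_simp
        ring
      have E5 : ((narayana (v+3+u+1) (v+2) : ℕ) : ℚ) * Dq
          = Zq^2 * ((↑v+↑u+3)^2*(↑v+↑u+4)*(↑v+2)*(↑v+3)) := by
        rw [narq (v+3+u+1) (v+2) (v+1) (u+2) (by omega) (by omega)]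
        rw [show (v+1)+(u+2) = v+u+3 from by omega, show v+u+3+1 = v+u+4 from by omega]
        rw [hDq, hZq]
        simp only [Nat.factorial_succ]
        push_cast
        have h1 := fact_pos_q u
        have h2 := fact_pos_q v
        have h3 := fact_pos_q (v+u)
        field_simp
        ring
      have E6 : ((narayana (v+3+u) (v+2) : ℕ) : ℚ) * Dq
          = Zq^2 * ((↑v+↑u+3)*(↑v+2)*(↑v+3)*(↑u+2)*(↑u+3)) := by
        rw [narq (v+3+u) (v+2) (v+1) (u+1) (by omega) (by omega)]
        rw [show (v+1)+(u+1) = v+u+2 from by omega, show v+u+2+1 = v+u+3 from by omega]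
        rw [hDq, hZq]
        simp only [Nat.factorial_succ]
        push_cast
        have h1 := fact_pos_q u
        have h2 := fact_pos_q v
        have h3 := fact_pos_q (v+u)
        field_simp
        ring
      push_cast at E1 E2 E3 E4 E5 E6 ⊢
      refine mul_right_cancel₀ hD ?_
      linear_combination ((v:ℚ)+↑u+6) * E1 + ((v:ℚ)+↑u+3) * E2 + ((v:ℚ)+↑u+3) * E3
        - (2*((v:ℚ)+↑u)+9) * E4 - (2*((v:ℚ)+↑u)+9) * E5 - (2*((v:ℚ)+↑u)+6) * E6

abbrev R2 : Type := MvPolynomial (Fin 2) ℤ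

lemma caP_expand (n : ℕ) : caP (n+1)
    = ∑ i ∈ Finset.range (n+1), (narayana (n+1) (i+1) : R2) * X 0 ^ i * X 1 ^ (n - i) := by
  unfold caP
  apply Finset.sum_congr rfl
  intro i _
  congr 2

lemma sA (n d N : ℕ) (h0 : narayana n (d - 1) = 0) :
    (X 0 : R2) * ∑ i ∈ Finset.range (N+1), (narayana n (i+d) : R2) * X 0 ^ i * X 1 ^ (N-i)
      = ∑ j ∈ Finset.range (N+2), (narayana n (j+d-1) : R2) * X 0 ^ j * X 1 ^ (N+1-j) := by
  rw [Finset.mul_sum]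
  rw [Finset.sum_range_succ' (fun j => (narayana n (j+d-1) : R2) * X 0 ^ j * X 1 ^ (N+1-j)) (N+1)]
  simp only [Nat.zero_add, h0, Nat.cast_zero, zero_mul, pow_zero, mul_one, add_zero]
  apply Finset.sum_congr rfl
  intro i hi
  rw [show i+1+d-1 = i+d from by omega, show N+1-(i+1) = N-i from by omega]
  ring

lemma sB (n d N : ℕ) (htop : narayana n (N+1+d) = 0) :
    (X 1 : R2) * ∑ i ∈ Finset.range (N+1), (narayana n (i+d) : R2) * X 0 ^ i * X 1 ^ (N-i)
      = ∑ j ∈ Finset.range (N+2), (narayana n (j+d) : R2) * X 0 ^ j * X 1 ^ (N+1-j) := by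
  rw [Finset.mul_sum]
  rw [Finset.sum_range_succ (fun j => (narayana n (j+d) : R2) * X 0 ^ j * X 1 ^ (N+1-j)) (N+1)]
  simp only [htop, Nat.cast_zero, zero_mul, add_zero]
  apply Finset.sum_congr rfl
  intro i hi
  rw [Finset.mem_range] at hi
  rw [show N+1-i = (N-i)+1 from by omega]
  ring

lemma caP_zero : caP 0 = 0 := by simp [caP]

lemma caP_one : caP 1 = 1 := by
  simp [caP, narayana_one_right]

lemma caP_two : caP 2 = X 0 + X 1 := by
  rw [caP]
  rw [Finset.sum_range_succ, Finset.sum_range_succ, Finset.sum_range_zero]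
  norm_num [narayana_one_right, show narayana 2 2 = 1 from by decide]
  ring

set_option maxHeartbeats 1000000 in
lemma KI (m : ℕ) : ((m : R2)+3) * caP (m+2) + (m : R2) * (X 0 - X 1)^2 * caP m
    = (2*(m : R2)+3) * (X 0 + X 1) * caP (m+1) := by
  rcases m with _ | w
  · simp [caP_zero, caP_one, caP_two]
  · -- m = w+1
    have hcap3 : caP (w+1+2) = ∑ i ∈ Finset.range (w+3),
        (narayana (w+3) (i+1) : R2) * X 0 ^ i * X 1 ^ (w+2-i) := by
      rw [show w+1+2 = (w+2)+1 from by omega, caP_expand (w+2)]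
    have hcap2 : caP (w+1+1) = ∑ i ∈ Finset.range (w+2),
        (narayana (w+2) (i+1) : R2) * X 0 ^ i * X 1 ^ (w+1-i) := by
      rw [show w+1+1 = (w+1)+1 from rfl, caP_expand (w+1)]
    have hcap1 : caP (w+1) = ∑ i ∈ Finset.range (w+1),
        (narayana (w+1) (i+1) : R2) * X 0 ^ i * X 1 ^ (w-i) := caP_expand w
    -- expansions of products
    have stepA2 : (X 0 : R2) * caP (w+2) = ∑ j ∈ Finset.range (w+3),
        (narayana (w+2) j : R2) * X 0 ^ j * X 1 ^ (w+2-j) := by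
      rw [show caP (w+2) = _ from hcap2, sA (w+2) 1 (w+1) (by simp [narayana_zero_right])]
      simp [Nat.add_sub_cancel, show w+1+1 = w+2 from rfl, show w+1+2 = w+3 from rfl]
    have stepB2 : (X 1 : R2) * caP (w+2) = ∑ j ∈ Finset.range (w+3),
        (narayana (w+2) (j+1) : R2) * X 0 ^ j * X 1 ^ (w+2-j) := by
      rw [show caP (w+2) = _ from hcap2,
        sB (w+2) 1 (w+1) (narayana_eq_zero_of_lt (by omega) (by omega))]
    have step1A : (X 0 : R2) * caP (w+1) = ∑ j ∈ Finset.range (w+2),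
        (narayana (w+1) j : R2) * X 0 ^ j * X 1 ^ (w+1-j) := by
      rw [hcap1, sA (w+1) 1 w (by simp [narayana_zero_right])]
      simp [Nat.add_sub_cancel, show w+1+1 = w+2 from rfl]
    have step1B : (X 1 : R2) * caP (w+1) = ∑ j ∈ Finset.range (w+2),
        (narayana (w+1) (j+1) : R2) * X 0 ^ j * X 1 ^ (w+1-j) := by
      rw [hcap1, sB (w+1) 1 w (narayana_eq_zero_of_lt (by omega) (by omega))]
    have step2AA : (X 0 : R2) * ((X 0 : R2) * caP (w+1)) = ∑ j ∈ Finset.range (w+3),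
        (narayana (w+1) (j-1) : R2) * X 0 ^ j * X 1 ^ (w+2-j) := by
      rw [step1A]
      have h := sA (w+1) 0 (w+1) (by simp [narayana_zero_right])
      simpa using h
    have step2AB : (X 1 : R2) * ((X 0 : R2) * caP (w+1)) = ∑ j ∈ Finset.range (w+3),
        (narayana (w+1) j : R2) * X 0 ^ j * X 1 ^ (w+2-j) := by
      rw [step1A]
      have h := sB (w+1) 0 (w+1) (narayana_eq_zero_of_lt (n := w+1) (k := w+1+1+0) (by omega) (by omega))
      simpa using h
    have step2BB : (X 1 : R2) * ((X 1 : R2) * caP (w+1)) = ∑ j ∈ Finset.range (w+3),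
        (narayana (w+1) (j+1) : R2) * X 0 ^ j * X 1 ^ (w+2-j) := by
      rw [step1B, sB (w+1) 1 (w+1) (narayana_eq_zero_of_lt (by omega) (by omega))]
    -- combined sum identity
    have hsum : ((w:R2)+4) * (∑ j ∈ Finset.range (w+3),
          (narayana (w+3) (j+1) : R2) * X 0 ^ j * X 1 ^ (w+2-j))
        + ((w:R2)+1) * ((∑ j ∈ Finset.range (w+3),
            (narayana (w+1) (j-1) : R2) * X 0 ^ j * X 1 ^ (w+2-j))
          - 2 * (∑ j ∈ Finset.range (w+3),
            (narayana (w+1) j : R2) * X 0 ^ j * X 1 ^ (w+2-j))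
          + (∑ j ∈ Finset.range (w+3),
            (narayana (w+1) (j+1) : R2) * X 0 ^ j * X 1 ^ (w+2-j)))
        = (2*(w:R2)+5) * ((∑ j ∈ Finset.range (w+3),
            (narayana (w+2) j : R2) * X 0 ^ j * X 1 ^ (w+2-j))
          + (∑ j ∈ Finset.range (w+3),
            (narayana (w+2) (j+1) : R2) * X 0 ^ j * X 1 ^ (w+2-j))) := by
      simp only [Finset.mul_sum, ← Finset.sum_add_distrib, ← Finset.sum_sub_distrib]
      apply Finset.sum_congr rfl
      intro j hj
      rw [Finset.mem_range] at hj
      have hN := NID (w+1) j (by omega)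
      have hc : ((((w+1)+3) * narayana ((w+1)+2) (j+1)
            + (w+1) * narayana (w+1) (j+1) + (w+1) * narayana (w+1) (j-1) : ℕ) : R2)
          = (((2*(w+1)+3) * (narayana ((w+1)+1) (j+1) + narayana ((w+1)+1) j)
            + 2*(w+1) * narayana (w+1) j : ℕ) : R2) := by
        exact_mod_cast congrArg (Nat.cast : ℕ → R2) hN
      push_cast at hc
      rw [show (w+1)+2 = w+3 from by omega, show (w+1)+1 = w+2 from by omega] at hc
      linear_combination (X 0 ^ j * X 1 ^ (w+2-j) : R2) * hc
    push_cast
    rw [show caP (w+1+2) = caP (w+3) from rfl, show caP (w+1+1) = caP (w+2) from rfl]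
    have hcap3' : caP (w+3) = ∑ i ∈ Finset.range (w+3),
        (narayana (w+3) (i+1) : R2) * X 0 ^ i * X 1 ^ (w+2-i) := hcap3
    linear_combination ((w:R2)+4) * hcap3' + ((w:R2)+1) * step2AA - 2*((w:R2)+1) * step2AB
      + ((w:R2)+1) * step2BB - (2*(w:R2)+5) * stepA2 - (2*(w:R2)+5) * stepB2 + hsum

noncomputable def gseq : ℕ → R2
  | 0 => 0
  | (m+1) => (if m = 0 then 1 else 0) + (X 0 + X 1) * gseq m
      + (X 0 * X 1) * ∑ p ∈ (Finset.range (m+1)).attach,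
          gseq p.1 * gseq (m - p.1)
decreasing_by
  · omega
  · have := p.2; rw [Finset.mem_range] at this; omega
  · omega

lemma gseq_succ (m : ℕ) : gseq (m+1) = (if m = 0 then 1 else 0) + (X 0 + X 1) * gseq m
    + (X 0 * X 1) * ∑ p ∈ Finset.range (m+1), gseq p * gseq (m - p) := by
  rw [gseq]
  congr 1
  rw [← Finset.sum_attach (Finset.range (m+1)) (fun p => gseq p * gseq (m - p))]

noncomputable def Gs : PowerSeries R2 := PowerSeries.mk gseq

lemma Gs_quad : Gs = PowerSeries.X
    + PowerSeries.C (X 0 + X 1) * PowerSeries.X * Gs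
    + PowerSeries.C (X 0 * X 1) * PowerSeries.X * Gs ^ 2 := by
  ext n
  rw [show (PowerSeries.C (X 0 + X 1) * PowerSeries.X * Gs : PowerSeries R2)
        = PowerSeries.C (X 0 + X 1) * (Gs * PowerSeries.X) from by ring,
      show (PowerSeries.C (X 0 * X 1) * PowerSeries.X * Gs ^ 2 : PowerSeries R2)
        = PowerSeries.C (X 0 * X 1) * ((Gs * Gs) * PowerSeries.X) from by ring]
  rcases n with _ | m
  · simp [Gs, gseq, PowerSeries.coeff_zero_eq_constantCoeff]
  · rw [map_add, map_add, PowerSeries.coeff_C_mul, PowerSeries.coeff_C_mul,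
        PowerSeries.coeff_succ_mul_X, PowerSeries.coeff_succ_mul_X,
        PowerSeries.coeff_X, PowerSeries.coeff_mul,
        Finset.Nat.sum_antidiagonal_eq_sum_range_succ_mk]
    simp only [Gs, PowerSeries.coeff_mk]
    rw [gseq_succ]
    by_cases hm : m = 0 <;> simp [hm] <;> ring

noncomputable abbrev dPS : PowerSeries R2 → PowerSeries R2 :=
  fun f => PowerSeries.derivative (R := R2) f

noncomputable def Lop (H : PowerSeries R2) : PowerSeries R2 :=
  (dPS H) * PowerSeries.X
    - PowerSeries.C (2*(X 0 + X 1)) * ((dPS H) * PowerSeries.X^2)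
    + PowerSeries.C ((X 0 - X 1)^2) * ((dPS H) * PowerSeries.X^3)
    + H - PowerSeries.C (X 0 + X 1) * (H * PowerSeries.X)

lemma Lop_Gs : Lop Gs = 2 * PowerSeries.X := by
  have hQ : PowerSeries.C (X 0 * X 1) * PowerSeries.X * Gs ^ 2
      - (1 - PowerSeries.C (X 0 + X 1) * PowerSeries.X) * Gs + PowerSeries.X = 0 := by
    linear_combination -Gs_quad
  have hdQ := congrArg dPS hQ
  simp only [dPS, map_add, map_sub, map_mul, Derivation.leibniz, Derivation.leibniz_pow,
    PowerSeries.derivative_X, PowerSeries.derivative_C, map_zero, map_one,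
    smul_eq_mul, mul_one, zero_mul, mul_zero, nsmul_eq_mul, Nat.cast_ofNat,
    map_sub, Derivation.map_one_eq_zero] at hdQ
  rw [show ((2:ℕ)-1) = 1 from rfl] at hdQ
  unfold Lop dPS
  simp only [map_mul, map_add, map_sub, map_pow, map_ofNat] at hQ ⊢
  set cA : PowerSeries R2 := PowerSeries.C (X 0) with hcA
  set cB : PowerSeries R2 := PowerSeries.C (X 1) with hcB
  linear_combination ((1 - (cA + cB) * PowerSeries.X) - 2
      - 4 * (cA * cB) * PowerSeries.X^2 * (PowerSeries.derivative (R := R2) Gs)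
      - 2 * (cA * cB) * PowerSeries.X * Gs) * hQ
    + (PowerSeries.X * (2 * (cA * cB) * PowerSeries.X * Gs
      - (1 - (cA + cB) * PowerSeries.X))) * hdQ

lemma coeff_Fcat (n : ℕ) : PowerSeries.coeff n Fcat = caP n := by
  simp [Fcat]

lemma Lop_Fcat : Lop Fcat = 2 * PowerSeries.X := by
  apply PowerSeries.ext; intro n
  rw [show (2 : PowerSeries R2) * PowerSeries.X = PowerSeries.X + PowerSeries.X from by ring,
    map_add, PowerSeries.coeff_X]
  unfold Lop
  rw [map_sub, map_add, map_add, map_sub, PowerSeries.coeff_C_mul, PowerSeries.coeff_C_mul,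
    PowerSeries.coeff_C_mul]
  rw [PowerSeries.coeff_mul_X_pow', PowerSeries.coeff_mul_X_pow']
  rcases n with _ | _ | _ | m
  · norm_num [coeff_Fcat, caP_zero]
  · rw [PowerSeries.coeff_succ_mul_X, PowerSeries.coeff_succ_mul_X]
    norm_num [PowerSeries.coeff_derivative, coeff_Fcat, caP_zero, caP_one]
  · rw [PowerSeries.coeff_succ_mul_X, PowerSeries.coeff_succ_mul_X]
    rw [if_pos (show 2 ≤ 1+1 by omega), if_neg (show ¬ 3 ≤ 1+1 by omega)]
    norm_num [PowerSeries.coeff_derivative, coeff_Fcat]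
    have h := KI 0
    rw [caP_zero] at h
    push_cast at h
    linear_combination h
  · rw [PowerSeries.coeff_succ_mul_X, PowerSeries.coeff_succ_mul_X]
    rw [if_pos (show 2 ≤ m+1+1+1 by omega), if_pos (show 3 ≤ m+1+1+1 by omega)]
    rw [show m+1+1+1-2 = m+1 from by omega, show m+1+1+1-3 = m from by omega]
    simp only [PowerSeries.coeff_derivative, coeff_Fcat]
    rw [show caP (m+1+1) = caP (m+2) from rfl, show caP (m+1+1+1) = caP (m+3) from rfl,
      show caP (m+2+1) = caP (m+3) from rfl]
    rw [if_neg (show ¬ m+1+1+1 = 1 by omega)]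
    have h := KI (m+1)
    rw [show caP (m+1+2) = caP (m+3) from rfl, show caP (m+1+1) = caP (m+2) from rfl] at h
    push_cast at h ⊢
    linear_combination h

lemma nz_R2 (m : ℕ) : ((m : R2) + 2) ≠ 0 := by
  intro h
  have h2 := congrArg (MvPolynomial.constantCoeff (R := ℤ) (σ := Fin 2)) h
  simp only [map_add, map_natCast, map_ofNat, map_zero] at h2
  have : ((m : ℤ) + 2) = 0 := by exact_mod_cast h2
  omega

lemma Lop_inj_zero (H : PowerSeries R2) (hH : Lop H = 0) : H = 0 := by
  apply PowerSeries.ext; intro n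
  induction n using Nat.strong_induction_on with
  | _ n ih =>
  have hc := congrArg (PowerSeries.coeff n) hH
  unfold Lop at hc
  rw [map_sub, map_add, map_add, map_sub, PowerSeries.coeff_C_mul, PowerSeries.coeff_C_mul,
    PowerSeries.coeff_C_mul, PowerSeries.coeff_mul_X_pow', PowerSeries.coeff_mul_X_pow',
    map_zero] at hc
  rcases n with _ | m
  · norm_num at hc
    simpa using hc
  · rw [PowerSeries.coeff_succ_mul_X, PowerSeries.coeff_succ_mul_X] at hc
    simp only [PowerSeries.coeff_derivative] at hc
    have z3 : PowerSeries.coeff m H = 0 := ih m (by omega)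
    rw [map_zero]
    by_cases h1 : 2 ≤ m + 1
    · rw [if_pos h1] at hc
      have z1 : PowerSeries.coeff (m+1-2+1) H = 0 := ih _ (by omega)
      by_cases h2 : 3 ≤ m + 1
      · rw [if_pos h2] at hc
        have z2 : PowerSeries.coeff (m+1-3+1) H = 0 := ih _ (by omega)
        rw [z1, z2, z3] at hc
        push_cast at hc
        have hz : ((m : R2) + 2) * PowerSeries.coeff (m+1) H = 0 := by
          linear_combination hc
        rcases mul_eq_zero.mp hz with h | h
        · exact absurd h (nz_R2 m)
        · exact h
      · rw [if_neg h2] at hc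
        rw [z1, z3] at hc
        push_cast at hc
        have hz : ((m : R2) + 2) * PowerSeries.coeff (m+1) H = 0 := by
          linear_combination hc
        rcases mul_eq_zero.mp hz with h | h
        · exact absurd h (nz_R2 m)
        · exact h
    · rw [if_neg h1, if_neg (show ¬ 3 ≤ m+1 from by omega)] at hc
      rw [z3] at hc
      push_cast at hc
      have hz : ((m : R2) + 2) * PowerSeries.coeff (m+1) H = 0 := by
        linear_combination hc
      rcases mul_eq_zero.mp hz with h | h
      · exact absurd h (nz_R2 m)
      · exact h

lemma Fcat_eq_Gs : Fcat = Gs := by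
  have hlin : Lop (Fcat - Gs) = Lop Fcat - Lop Gs := by
    unfold Lop dPS
    rw [map_sub]
    ring
  have hdiff : Lop (Fcat - Gs) = 0 := by
    rw [hlin, Lop_Fcat, Lop_Gs, sub_self]
  exact sub_eq_zero.mp (Lop_inj_zero _ hdiff)

theorem stmt2 :
    Fcat = PowerSeries.X
        + PowerSeries.C (X 0 + X 1) * PowerSeries.X * Fcat
        + PowerSeries.C (X 0 * X 1) * PowerSeries.X * Fcat ^ 2 ∧
    PowerSeries.C (X 0 * X 1) * PowerSeries.X * Fcat ^ 2
        - (1 - PowerSeries.C (X 0 + X 1) * PowerSeries.X) * Fcat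
        + PowerSeries.X = 0 := by
  have h1 : Fcat = PowerSeries.X
      + PowerSeries.C (X 0 + X 1) * PowerSeries.X * Fcat
      + PowerSeries.C (X 0 * X 1) * PowerSeries.X * Fcat ^ 2 := by
    rw [Fcat_eq_Gs]
    exact Gs_quad
  exact ⟨h1, by linear_combination -h1⟩
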